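/- Let f be a complex polynomial (regarded as a function on [0,1] ⊂ ℝ) such that all its moments vanish: ∫₀¹ f(x)^m dx = 0 for every integer m ≥ 1. Then for every t ∈ ℂ with |t| · max_{x ∈ [0,1]} |f(x)| < 1, one has ∫₀¹ 1/(1 − t·f(x)) dx = 1. -/

import Mathlib

/-- If all the moments of a complex polynomial `f` on `[0,1]` vanish, then
`∫₀¹ 1/(1 − t f(x)) dx = 1` for every `t` with `|t| · max_{[0,1]} |f| < 1`. -/
theorem stmt_13 (f : Polynomial ℂ)
    (hM : ∀ m : ℕ, 1 ≤ m → (∫ x in (0:ℝ)..1, (f.eval (x : ℂ)) ^ m) = 0)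
    (t : ℂ)
    (ht : ‖t‖ * (⨆ x ∈ Set.Icc (0:ℝ) 1, ‖f.eval (x : ℂ)‖) < 1) :
    (∫ x in (0:ℝ)..1, 1 / (1 - t * f.eval (x : ℂ))) = 1 := by
  set S := ⨆ x ∈ Set.Icc (0:ℝ) 1, ‖f.eval (x : ℂ)‖ with hSdef
  have hcont : Continuous fun x : ℝ => f.eval (x : ℂ) :=
    f.continuous.comp Complex.continuous_ofReal
  obtain ⟨C, hC⟩ := isCompact_Icc.exists_bound_of_continuousOn
    (s := Set.Icc (0:ℝ) 1) hcont.continuousOn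
  have hbdd : BddAbove (Set.range fun x : ℝ =>
      ⨆ _ : x ∈ Set.Icc (0:ℝ) 1, ‖f.eval (x : ℂ)‖) := by
    refine ⟨max C 0, ?_⟩
    rintro y ⟨x, rfl⟩
    exact Real.iSup_le (fun hx => le_max_of_le_left (hC x hx)) (le_max_right _ _)
  have hle : ∀ x ∈ Set.Icc (0:ℝ) 1, ‖f.eval (x : ℂ)‖ ≤ S := by
    intro x hx
    have h1 : (⨆ _ : x ∈ Set.Icc (0:ℝ) 1, ‖f.eval (x : ℂ)‖)
        = ‖f.eval (x : ℂ)‖ := ciSup_pos hx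
    rw [← h1]
    exact le_ciSup hbdd x
  have hS0 : 0 ≤ S := le_trans (norm_nonneg _) (hle 0 (by norm_num))
  set r := ‖t‖ * S with hrdef
  have hr0 : 0 ≤ r := mul_nonneg (norm_nonneg _) hS0
  have key : ∀ x ∈ Set.Icc (0:ℝ) 1, ‖t * f.eval (x : ℂ)‖ ≤ r := by
    intro x hx
    rw [norm_mul]
    exact mul_le_mul_of_nonneg_left (hle x hx) (norm_nonneg _)
  rw [intervalIntegral.integral_of_le zero_le_one]
  have hEq : Set.EqOn (fun x : ℝ => 1 / (1 - t * f.eval (x : ℂ)))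
      (fun x : ℝ => ∑' n : ℕ, (t * f.eval (x : ℂ)) ^ n) (Set.Ioc 0 1) := by
    intro x hx
    dsimp only
    rw [tsum_geometric_of_norm_lt_one
      (lt_of_le_of_lt (key x (Set.Ioc_subset_Icc_self hx)) ht)]
    simp [one_div]
  rw [MeasureTheory.setIntegral_congr_fun measurableSet_Ioc hEq]
  have hcn : ∀ n : ℕ, Continuous fun x : ℝ => (t * f.eval (x : ℂ)) ^ n :=
    fun n => (continuous_const.mul hcont).pow n
  have hint : ∀ n : ℕ, MeasureTheory.IntegrableOn
      (fun x : ℝ => (t * f.eval (x : ℂ)) ^ n) (Set.Ioc 0 1) :=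
    fun n => (hcn n).integrableOn_Ioc
  have hsum : Summable fun n : ℕ =>
      ∫ x in Set.Ioc (0:ℝ) 1, ‖(t * f.eval (x : ℂ)) ^ n‖ := by
    refine Summable.of_nonneg_of_le
      (fun n => MeasureTheory.integral_nonneg fun x => norm_nonneg _)
      (fun n => ?_) (summable_geometric_of_lt_one hr0 ht)
    calc ∫ x in Set.Ioc (0:ℝ) 1, ‖(t * f.eval (x : ℂ)) ^ n‖
        ≤ ∫ _x in Set.Ioc (0:ℝ) 1, r ^ n := by
          refine MeasureTheory.setIntegral_mono_on ((hint n).norm)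
            ((MeasureTheory.integrableOn_const_iff (by simp)).mpr (Or.inr (by simp)))
            measurableSet_Ioc (fun x hx => ?_)
          rw [norm_pow]
          exact pow_le_pow_left₀ (norm_nonneg _) (key x (Set.Ioc_subset_Icc_self hx)) n
      _ = r ^ n := by simp
  rw [← MeasureTheory.integral_tsum_of_summable_integral_norm hint hsum]
  rw [tsum_eq_single 0]
  · simp
  · intro n hn
    have hfun : (fun x : ℝ => (t * f.eval (x : ℂ)) ^ n)
        = fun x : ℝ => t ^ n * (f.eval (x : ℂ)) ^ n := by
      funext x; rw [mul_pow]
    rw [hfun, MeasureTheory.integral_const_mul, ← intervalIntegral.integral_of_le zero_le_one,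
      hM n (Nat.one_le_iff_ne_zero.mpr hn), mul_zero]
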